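/- Let E be a real inner product space with inner product ⟨·,·⟩_H. Fix T > 0, an integer N ≥ 1, set Δt = T/N, and let u^0, u^1, …, u^N ∈ E with difference quotients ∂u^n := (u^n − u^{n−1})/Δt for 1 ≤ n ≤ N; let the DQ snapshot family be the M = 2N+1 vectors {u^n}_{n=0}^N ∪ {∂u^n}_{n=1}^N. Assume φ_1, …, φ_d ∈ E are POD modes for this family: the φ_i are ⟨·,·⟩_H-orthonormal, every vector of the family lies in span{φ_1, …, φ_d}, and there exist nonnegative reals λ_1^DQ, …, λ_d^DQ with (1/(2N+1)) Σ over the family of ⟨y, φ_i⟩_H ⟨y, φ_j⟩_H = λ_i^DQ δ_{ij}. Let ⟨·,·⟩_W be a second inner product on E with norm ‖·‖_W, and let P_r v = Σ_{i=1}^r ⟨v, φ_i⟩_H φ_i for some 0 ≤ r ≤ d. Then max_{0 ≤ k ≤ N} ‖u^k − P_r u^k‖_W² ≤ C Σ_{i=r+1}^d λ_i^DQ ‖φ_i‖_W², where C = 6 max{1, T²}. -/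

import Mathlib

open scoped InnerProductSpace

/-- Bound (b) of Theorem 2.2: uniform-in-time DQ POD projection error bound in a
second inner-product norm `W`,
`max_k ‖u^k − P_r u^k‖_W² ≤ 6 max{1, T²} Σ_{i>r} λ_i^DQ ‖φ_i‖_W²`. -/
theorem dq_pod_uniform_bound_W
    {E : Type*} [NormedAddCommGroup E] [InnerProductSpace ℝ E]
    (T : ℝ) (hT : 0 < T) (N : ℕ) (hN : 1 ≤ N)
    (Δt : ℝ) (hΔt : Δt = T / N)
    (u : Fin (N + 1) → E) (du : Fin N → E)
    (hdu : ∀ n : Fin N, du n = (Δt)⁻¹ • (u n.succ - u n.castSucc))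
    (d : ℕ) (φ : Fin d → E) (lam : Fin d → ℝ)
    (hortho : Orthonormal ℝ φ)
    (hspan_u : ∀ k, u k ∈ Submodule.span ℝ (Set.range φ))
    (hspan_du : ∀ n, du n ∈ Submodule.span ℝ (Set.range φ))
    (hlam_nonneg : ∀ i, 0 ≤ lam i)
    (hcorr : ∀ i j : Fin d,
      (1 / (2 * (N : ℝ) + 1)) *
        ((∑ k : Fin (N + 1), ⟪u k, φ i⟫_ℝ * ⟪u k, φ j⟫_ℝ) +
          ∑ n : Fin N, ⟪du n, φ i⟫_ℝ * ⟪du n, φ j⟫_ℝ)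
        = if i = j then lam i else 0)
    (innerW : E → E → ℝ)
    (hW_symm : ∀ u v, innerW u v = innerW v u)
    (hW_add : ∀ u v w, innerW (u + v) w = innerW u w + innerW v w)
    (hW_smul : ∀ (c : ℝ) (u v : E), innerW (c • u) v = c * innerW u v)
    (hW_pos : ∀ u : E, u ≠ 0 → 0 < innerW u u)
    (r : ℕ) (hr : r ≤ d)
    (P : E → E)
    (hP : ∀ v, P v = ∑ i ∈ Finset.univ.filter (fun i : Fin d => (i : ℕ) < r),
      ⟪v, φ i⟫_ℝ • φ i) :
    ∀ k : Fin (N + 1),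
      innerW (u k - P (u k)) (u k - P (u k)) ≤ 6 * max 1 (T ^ 2) *
        ∑ i ∈ Finset.univ.filter (fun i : Fin d => r ≤ (i : ℕ)),
          lam i * innerW (φ i) (φ i) := by
  classical
  intro k
  have hNr : (1:ℝ) ≤ (N:ℝ) := by exact_mod_cast hN
  have hNpos : (0:ℝ) < (N:ℝ) := by linarith
  have hΔt_pos : 0 < Δt := by rw [hΔt]; positivity
  have hΔt_ne : Δt ≠ 0 := ne_of_gt hΔt_pos
  -- basic facts about the bilinear form innerW
  have W0 : ∀ v : E, innerW 0 v = 0 := by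
    intro v
    have h := hW_smul 0 0 v
    simpa using h
  have Wadd' : ∀ a b c : E, innerW a (b + c) = innerW a b + innerW a c := by
    intro a b c; rw [hW_symm, hW_add, hW_symm b, hW_symm c]
  have Wsmul' : ∀ (t : ℝ) (a b : E), innerW a (t • b) = t * innerW a b := by
    intro t a b; rw [hW_symm, hW_smul, hW_symm]
  have Wneg : ∀ a b : E, innerW (-a) b = - innerW a b := by
    intro a b
    have h := hW_smul (-1) a b
    simpa using h
  have Wneg' : ∀ a b : E, innerW a (-b) = - innerW a b := by
    intro a b; rw [hW_symm, Wneg, hW_symm]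
  have Wsub : ∀ a b c : E, innerW (a - b) c = innerW a c - innerW b c := by
    intro a b c; rw [sub_eq_add_neg, hW_add, Wneg, sub_eq_add_neg]
  have Wsub' : ∀ a b c : E, innerW a (b - c) = innerW a b - innerW a c := by
    intro a b c; rw [sub_eq_add_neg, Wadd', Wneg', sub_eq_add_neg]
  have qnonneg : ∀ x : E, 0 ≤ innerW x x := by
    intro x
    by_cases hx : x = 0
    · rw [hx, W0 0]
    · exact (hW_pos x hx).le
  have h2ab : ∀ a b : E, 2 * innerW a b ≤ innerW a a + innerW b b := by
    intro a b
    have h := qnonneg (a - b)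
    rw [Wsub, Wsub', Wsub', hW_symm b a] at h
    linarith
  have qsmul : ∀ (t : ℝ) (x : E), innerW (t • x) (t • x) = t ^ 2 * innerW x x := by
    intro t x; rw [hW_smul, Wsmul']; ring
  have qneg : ∀ x : E, innerW (-x) (-x) = innerW x x := by
    intro x; rw [Wneg, Wneg']; ring
  have qadd2 : ∀ a b : E, innerW (a + b) (a + b) ≤ 2 * innerW a a + 2 * innerW b b := by
    intro a b
    have h := h2ab a b
    rw [hW_add, Wadd', Wadd', hW_symm b a]
    linarith
  have Wsum : ∀ {ι : Type} (s : Finset ι) (v : ι → E) (w : E),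
      innerW (∑ i ∈ s, v i) w = ∑ i ∈ s, innerW (v i) w := by
    intro ι s v w
    induction s using Finset.induction_on with
    | empty => simpa using W0 w
    | insert _ _ h ih => rw [Finset.sum_insert h, Finset.sum_insert h, hW_add, ih]
  have Wsum' : ∀ {ι : Type} (s : Finset ι) (v : ι → E) (w : E),
      innerW w (∑ i ∈ s, v i) = ∑ i ∈ s, innerW w (v i) := by
    intro ι s v w
    rw [hW_symm, Wsum]
    exact Finset.sum_congr rfl fun i _ => hW_symm _ _
  have qsum : ∀ {ι : Type} (s : Finset ι) (v : ι → E),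
      innerW (∑ i ∈ s, v i) (∑ i ∈ s, v i) ≤ (s.card : ℝ) * ∑ i ∈ s, innerW (v i) (v i) := by
    intro ι s v
    rw [Wsum]
    calc ∑ i ∈ s, innerW (v i) (∑ j ∈ s, v j)
        = ∑ i ∈ s, ∑ j ∈ s, innerW (v i) (v j) :=
          Finset.sum_congr rfl fun i _ => Wsum' s v (v i)
      _ ≤ ∑ i ∈ s, ∑ j ∈ s, (innerW (v i) (v i) + innerW (v j) (v j)) / 2 := by
          refine Finset.sum_le_sum fun i _ => Finset.sum_le_sum fun j _ => ?_
          have := h2ab (v i) (v j); linarith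
      _ = (s.card : ℝ) * ∑ i ∈ s, innerW (v i) (v i) := by
          have h1 : ∀ i, ∑ j ∈ s, (innerW (v i) (v i) + innerW (v j) (v j)) / 2
              = ((s.card : ℝ) * innerW (v i) (v i) + ∑ j ∈ s, innerW (v j) (v j)) / 2 := by
            intro i
            rw [← Finset.sum_div, Finset.sum_add_distrib, Finset.sum_const, nsmul_eq_mul]
          rw [Finset.sum_congr rfl fun i _ => h1 i, ← Finset.sum_div, Finset.sum_add_distrib,
            ← Finset.mul_sum, Finset.sum_const, nsmul_eq_mul]
          ring
  -- linearity of P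
  have Pzero : P 0 = 0 := by
    rw [hP]
    simp
  have Padd : ∀ a b : E, P (a + b) = P a + P b := by
    intro a b
    rw [hP, hP, hP, ← Finset.sum_add_distrib]
    exact Finset.sum_congr rfl fun i _ => by rw [inner_add_left, add_smul]
  have Psmul : ∀ (t : ℝ) (a : E), P (t • a) = t • P a := by
    intro t a
    rw [hP, hP, Finset.smul_sum]
    exact Finset.sum_congr rfl fun i _ => by rw [real_inner_smul_left, smul_smul]
  have Psub : ∀ a b : E, P (a - b) = P a - P b := by
    intro a b
    rw [sub_eq_add_neg, Padd, ← neg_one_smul ℝ b, Psmul, neg_one_smul, sub_eq_add_neg]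
  have Psum : ∀ {ι : Type} (s : Finset ι) (v : ι → E), P (∑ i ∈ s, v i) = ∑ i ∈ s, P (v i) := by
    intro ι s v
    induction s using Finset.induction_on with
    | empty => simpa using Pzero
    | insert _ _ h ih => rw [Finset.sum_insert h, Finset.sum_insert h, Padd, ih]
  -- the tail set of indices
  set Sr := Finset.univ.filter (fun i : Fin d => r ≤ (i : ℕ)) with hSrdef
  -- representation of the projection error
  have hrep : ∀ y : E, y ∈ Submodule.span ℝ (Set.range φ) →
      y - P y = ∑ i ∈ Sr, ⟪y, φ i⟫_ℝ • φ i := by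
    intro y hy
    obtain ⟨c, hc⟩ := (Submodule.mem_span_range_iff_exists_fun ℝ).mp hy
    have horth := orthonormal_iff_ite.mp hortho
    have hcy : ∀ j, ⟪y, φ j⟫_ℝ = c j := by
      intro j
      rw [← hc, sum_inner]
      simp [real_inner_smul_left, horth]
    have huniv : y = ∑ i, ⟪y, φ i⟫_ℝ • φ i := by
      simp only [hcy]; exact hc.symm
    have hsplit := Finset.sum_filter_add_sum_filter_not Finset.univ
      (fun i : Fin d => (i : ℕ) < r) (fun i => ⟪y, φ i⟫_ℝ • φ i)
    have hnot : Finset.univ.filter (fun i : Fin d => ¬ (i : ℕ) < r) = Sr := by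
      rw [hSrdef]
      exact Finset.filter_congr fun i _ => by rw [not_lt]
    rw [hnot] at hsplit
    calc y - P y
        = (∑ i, ⟪y, φ i⟫_ℝ • φ i)
            - ∑ i ∈ Finset.univ.filter (fun i : Fin d => (i : ℕ) < r), ⟪y, φ i⟫_ℝ • φ i := by
          rw [← huniv, hP]
      _ = ∑ i ∈ Sr, ⟪y, φ i⟫_ℝ • φ i := by rw [← hsplit]; abel
  -- quadratic expansion
  have hqexp : ∀ (c : Fin d → ℝ),
      innerW (∑ i ∈ Sr, c i • φ i) (∑ i ∈ Sr, c i • φ i)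
        = ∑ i ∈ Sr, ∑ j ∈ Sr, c i * c j * innerW (φ i) (φ j) := by
    intro c
    rw [Wsum]
    refine Finset.sum_congr rfl fun i _ => ?_
    rw [Wsum']
    refine Finset.sum_congr rfl fun j _ => ?_
    rw [hW_smul, Wsmul']; ring
  set A := ∑ j : Fin (N+1), innerW (u j - P (u j)) (u j - P (u j)) with hAdef
  set B := ∑ n : Fin N, innerW (du n - P (du n)) (du n - P (du n)) with hBdef
  set S := ∑ i ∈ Sr, lam i * innerW (φ i) (φ i) with hSdef
  have hA_nonneg : 0 ≤ A := Finset.sum_nonneg fun _ _ => qnonneg _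
  have hB_nonneg : 0 ≤ B := Finset.sum_nonneg fun _ _ => qnonneg _
  have hMpos : (0:ℝ) < 2 * (N:ℝ) + 1 := by linarith
  have hcorr' : ∀ i j : Fin d,
      ((∑ kk : Fin (N + 1), ⟪u kk, φ i⟫_ℝ * ⟪u kk, φ j⟫_ℝ) +
          ∑ n : Fin N, ⟪du n, φ i⟫_ℝ * ⟪du n, φ j⟫_ℝ)
        = (2 * (N:ℝ) + 1) * (if i = j then lam i else 0) := by
    intro i j
    have h := hcorr i j
    field_simp at h
    rw [h]
    split_ifs <;> subst_vars <;> ring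
  have hswap : ∀ {κ : Type} (t : Finset κ) (f : κ → Fin d → Fin d → ℝ),
      (∑ x ∈ t, ∑ i ∈ Sr, ∑ j ∈ Sr, f x i j) = ∑ i ∈ Sr, ∑ j ∈ Sr, ∑ x ∈ t, f x i j := by
    intro κ t f
    rw [Finset.sum_comm]
    exact Finset.sum_congr rfl fun i _ => Finset.sum_comm
  have hkey : A + B = (2 * (N:ℝ) + 1) * S := by
    have h1 : A = ∑ kk : Fin (N+1), ∑ i ∈ Sr, ∑ j ∈ Sr,
        ⟪u kk, φ i⟫_ℝ * ⟪u kk, φ j⟫_ℝ * innerW (φ i) (φ j) := by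
      rw [hAdef]
      refine Finset.sum_congr rfl fun kk _ => ?_
      rw [hrep (u kk) (hspan_u kk), hqexp]
    have h2 : B = ∑ n : Fin N, ∑ i ∈ Sr, ∑ j ∈ Sr,
        ⟪du n, φ i⟫_ℝ * ⟪du n, φ j⟫_ℝ * innerW (φ i) (φ j) := by
      rw [hBdef]
      refine Finset.sum_congr rfl fun n _ => ?_
      rw [hrep (du n) (hspan_du n), hqexp]
    rw [h1, h2, hswap, hswap, ← Finset.sum_add_distrib]
    rw [hSdef, Finset.mul_sum]
    refine Finset.sum_congr rfl fun i hi => ?_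
    rw [← Finset.sum_add_distrib]
    calc ∑ j ∈ Sr, ((∑ kk : Fin (N+1), ⟪u kk, φ i⟫_ℝ * ⟪u kk, φ j⟫_ℝ * innerW (φ i) (φ j))
            + ∑ n : Fin N, ⟪du n, φ i⟫_ℝ * ⟪du n, φ j⟫_ℝ * innerW (φ i) (φ j))
        = ∑ j ∈ Sr, (if i = j then (2 * (N:ℝ) + 1) * lam i * innerW (φ i) (φ j) else 0) := by
          refine Finset.sum_congr rfl fun j _ => ?_
          rw [← Finset.sum_mul, ← Finset.sum_mul, ← add_mul, hcorr' i j]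
          split_ifs <;> ring
      _ = (2 * (N:ℝ) + 1) * (lam i * innerW (φ i) (φ i)) := by
          rw [Finset.sum_ite_eq Sr i (fun j => (2 * (N:ℝ) + 1) * lam i * innerW (φ i) (φ j))]
          rw [if_pos hi]; ring
  -- telescoping
  set F : Fin (N+1) → Finset (Fin N) :=
    fun m => Finset.univ.filter (fun n : Fin N => (n : ℕ) < (m : ℕ)) with hFdef
  have hstep : ∀ n : Fin N, u n.succ = u n.castSucc + Δt • du n := by
    intro n
    rw [hdu n, smul_smul, mul_inv_cancel₀ hΔt_ne, one_smul]
    abel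
  have hg : ∀ m : Fin (N+1), u m = u 0 + Δt • ∑ n ∈ F m, du n := by
    intro m
    induction m using Fin.induction with
    | zero =>
        have : F 0 = ∅ := by
          rw [hFdef]; simp
        rw [this]; simp
    | succ i ih =>
        have hfe : F i.succ = insert i (F i.castSucc) := by
          rw [hFdef]
          ext n
          simp only [Finset.mem_filter, Finset.mem_univ, true_and, Finset.mem_insert,
            Fin.val_succ, Fin.coe_castSucc]
          constructor
          · intro h
            rcases Nat.lt_succ_iff_lt_or_eq.mp h with h | h
            · exact Or.inr h
            · exact Or.inl (Fin.ext h)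
          · rintro (h | h)
            · rw [h]; omega
            · omega
        rw [hstep i, ih, hfe, Finset.sum_insert (by rw [hFdef]; simp), smul_add]
        abel
  have hEg : ∀ m : Fin (N+1),
      u m - P (u m) = (u 0 - P (u 0)) + Δt • ∑ n ∈ F m, (du n - P (du n)) := by
    intro m
    rw [hg m, Padd, Psmul, Psum, Finset.sum_sub_distrib, smul_sub]
    abel
  have hedjk : ∀ j kk : Fin (N+1), u kk - P (u kk)
      = (u j - P (u j)) + Δt • ((∑ n ∈ F kk, (du n - P (du n))) - ∑ n ∈ F j, (du n - P (du n))) := by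
    intro j kk
    rw [hEg kk, hEg j, smul_sub]
    abel
  -- bound for differences of partial sums
  have hBsub : ∀ s : Finset (Fin N),
      ∑ n ∈ s, innerW (du n - P (du n)) (du n - P (du n)) ≤ B := by
    intro s
    rw [hBdef]
    exact Finset.sum_le_sum_of_subset_of_nonneg (Finset.subset_univ s)
      (fun n _ _ => qnonneg _)
  have hDsub : ∀ s t : Finset (Fin N), s ⊆ t →
      innerW ((∑ n ∈ t, (du n - P (du n))) - ∑ n ∈ s, (du n - P (du n)))
        ((∑ n ∈ t, (du n - P (du n))) - ∑ n ∈ s, (du n - P (du n))) ≤ (N:ℝ) * B := by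
    intro s t hst
    have hdiff : (∑ n ∈ t, (du n - P (du n))) - ∑ n ∈ s, (du n - P (du n))
        = ∑ n ∈ t \ s, (du n - P (du n)) := by
      rw [← Finset.sum_sdiff hst]; abel
    rw [hdiff]
    calc innerW (∑ n ∈ t \ s, (du n - P (du n))) (∑ n ∈ t \ s, (du n - P (du n)))
        ≤ ((t \ s).card : ℝ) * ∑ n ∈ t \ s, innerW (du n - P (du n)) (du n - P (du n)) :=
          qsum _ _
      _ ≤ (N:ℝ) * B := by
          apply mul_le_mul
          · exact_mod_cast (Finset.card_le_card (Finset.subset_univ _)).trans_eq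
              (by simp)
          · exact hBsub _
          · exact Finset.sum_nonneg fun n _ => qnonneg _
          · exact hNpos.le
  have hD : ∀ j kk : Fin (N+1),
      innerW ((∑ n ∈ F kk, (du n - P (du n))) - ∑ n ∈ F j, (du n - P (du n)))
        ((∑ n ∈ F kk, (du n - P (du n))) - ∑ n ∈ F j, (du n - P (du n))) ≤ (N:ℝ) * B := by
    intro j kk
    have hmono : ∀ a b : Fin (N+1), (a:ℕ) ≤ (b:ℕ) → F a ⊆ F b := by
      intro a b hab n hn
      rw [hFdef] at hn ⊢
      simp only [Finset.mem_filter, Finset.mem_univ, true_and] at hn ⊢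
      omega
    rcases le_total ((j:ℕ)) ((kk:ℕ)) with h | h
    · exact hDsub _ _ (hmono j kk h)
    · have hneg : (∑ n ∈ F kk, (du n - P (du n))) - ∑ n ∈ F j, (du n - P (du n))
          = -((∑ n ∈ F j, (du n - P (du n))) - ∑ n ∈ F kk, (du n - P (du n))) := by abel
      rw [hneg, qneg]
      exact hDsub _ _ (hmono kk j h)
  -- the main averaged inequality
  have hmain : innerW (u k - P (u k)) (u k - P (u k))
      ≤ (2 / ((N:ℝ) + 1)) * A + 2 * Δt ^ 2 * (N:ℝ) * B := by
    set D : Fin (N+1) → E := fun j =>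
      (∑ n ∈ F k, (du n - P (du n))) - ∑ n ∈ F j, (du n - P (du n)) with hDdef
    have hv : ∀ j : Fin (N+1), (u j - P (u j)) + Δt • D j = u k - P (u k) :=
      fun j => (hedjk j k).symm
    have hsum : (∑ j : Fin (N+1), ((u j - P (u j)) + Δt • D j))
        = ((N:ℝ) + 1) • (u k - P (u k)) := by
      rw [Finset.sum_congr rfl (fun j _ => hv j), Finset.sum_const, Finset.card_univ,
        Fintype.card_fin, ← Nat.cast_smul_eq_nsmul ℝ]
      norm_num
    have hNp1 : ((N:ℝ) + 1) ≠ 0 := by positivity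
    have hek : u k - P (u k)
        = (1 / ((N:ℝ) + 1)) • ∑ j : Fin (N+1), ((u j - P (u j)) + Δt • D j) := by
      rw [hsum, smul_smul, one_div, inv_mul_cancel₀ hNp1, one_smul]
    calc innerW (u k - P (u k)) (u k - P (u k))
        = (1 / ((N:ℝ) + 1)) ^ 2 *
            innerW (∑ j : Fin (N+1), ((u j - P (u j)) + Δt • D j))
              (∑ j : Fin (N+1), ((u j - P (u j)) + Δt • D j)) := by
          rw [hek, qsmul]
      _ ≤ (1 / ((N:ℝ) + 1)) ^ 2 * (((N:ℝ) + 1) *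
            ∑ j : Fin (N+1), innerW ((u j - P (u j)) + Δt • D j) ((u j - P (u j)) + Δt • D j)) := by
          apply mul_le_mul_of_nonneg_left _ (by positivity)
          have hq := qsum Finset.univ (fun j : Fin (N+1) => (u j - P (u j)) + Δt • D j)
          rw [Finset.card_univ, Fintype.card_fin] at hq
          convert hq using 2
          · rfl
          · push_cast; ring
      _ ≤ (1 / ((N:ℝ) + 1)) ^ 2 * (((N:ℝ) + 1) *
            ∑ j : Fin (N+1), (2 * innerW (u j - P (u j)) (u j - P (u j))
              + 2 * Δt ^ 2 * ((N:ℝ) * B))) := by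
          apply mul_le_mul_of_nonneg_left _ (by positivity)
          apply mul_le_mul_of_nonneg_left _ (by positivity)
          refine Finset.sum_le_sum fun j _ => ?_
          calc innerW ((u j - P (u j)) + Δt • D j) ((u j - P (u j)) + Δt • D j)
              ≤ 2 * innerW (u j - P (u j)) (u j - P (u j))
                  + 2 * innerW (Δt • D j) (Δt • D j) := qadd2 _ _
            _ ≤ 2 * innerW (u j - P (u j)) (u j - P (u j)) + 2 * Δt ^ 2 * ((N:ℝ) * B) := by
                rw [qsmul]
                have := hD j k
                nlinarith [sq_nonneg Δt]
      _ = (2 / ((N:ℝ) + 1)) * A + 2 * Δt ^ 2 * (N:ℝ) * B := by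
          rw [Finset.sum_add_distrib, ← Finset.mul_sum, ← hAdef, Finset.sum_const,
            Finset.card_univ, Fintype.card_fin, nsmul_eq_mul]
          push_cast
          field_simp
  -- final arithmetic
  have hX1 : (1:ℝ) ≤ max 1 (T ^ 2) := le_max_left _ _
  have hXT : T ^ 2 ≤ max 1 (T ^ 2) := le_max_right _ _
  have hXpos : (0:ℝ) < max 1 (T ^ 2) := lt_of_lt_of_le one_pos hX1
  have hΔtsq : Δt ^ 2 * (N:ℝ) = T ^ 2 / (N:ℝ) := by
    rw [hΔt]; field_simp
  have hc1 : (2 / ((N:ℝ) + 1)) * A ≤ (6 * max 1 (T ^ 2) / (2 * (N:ℝ) + 1)) * A := by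
    apply mul_le_mul_of_nonneg_right _ hA_nonneg
    rw [div_le_div_iff₀ (by linarith) hMpos]
    nlinarith
  have hc2 : 2 * Δt ^ 2 * (N:ℝ) * B ≤ (6 * max 1 (T ^ 2) / (2 * (N:ℝ) + 1)) * B := by
    apply mul_le_mul_of_nonneg_right _ hB_nonneg
    have : 2 * Δt ^ 2 * (N:ℝ) = 2 * T ^ 2 / (N:ℝ) := by
      rw [mul_assoc, hΔtsq]; ring
    rw [this, div_le_div_iff₀ hNpos hMpos]
    nlinarith [sq_nonneg T]
  calc innerW (u k - P (u k)) (u k - P (u k))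
      ≤ (2 / ((N:ℝ) + 1)) * A + 2 * Δt ^ 2 * (N:ℝ) * B := hmain
    _ ≤ (6 * max 1 (T ^ 2) / (2 * (N:ℝ) + 1)) * A
          + (6 * max 1 (T ^ 2) / (2 * (N:ℝ) + 1)) * B := add_le_add hc1 hc2
    _ = (6 * max 1 (T ^ 2) / (2 * (N:ℝ) + 1)) * (A + B) := by ring
    _ = 6 * max 1 (T ^ 2) * S := by
        have hMne : (2 * (N:ℝ) + 1) ≠ 0 := ne_of_gt hMpos
        rw [hkey]
        field_simp
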